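/- arXiv:2210.10003 — 2 statements merged into one kernel-verified Lean document; each statement's English description precedes it below -/
import Mathlib

section
/- Let f(ω) = min_{Z ∈ K} F(ω,Z) where K is a compact metric space, F : Θ × K → ℝ is continuous, and F(·,Z) is affine in ω for each Z. Then for every ω₀ ∈ Θ and every feasible direction v (i.e., ω₀ + tv ∈ Θ for small t > 0), the one-sided directional derivative Df(ω₀; v) = lim_{t→0⁺} (f(ω₀+tv) − f(ω₀))/t exists and equals min_{Z ∈ Z(ω₀)} DᵥF(ω₀, Z), where Z(ω₀) is the set of minimizers of F(ω₀, ·) over K and DᵥF(ω₀,Z) is the directional derivative of the affine map F(·,Z) along v. -/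
open Filter Topology

theorem aux_min_dd {K : Type*} [TopologicalSpace K] [CompactSpace K] [Nonempty K]
    (p g : K → ℝ) (hp : Continuous p) (hg : Continuous g) :
    ∃ L : ℝ, IsLeast {l : ℝ | ∃ Z : K, (∀ Y : K, p Z ≤ p Y) ∧ l = g Z} L ∧
      Tendsto (fun t : ℝ => ((⨅ Z : K, (p Z + t * g Z)) - ⨅ Z : K, p Z) / t)
        (𝓝[>] 0) (𝓝 L) := by
  have hInfEq : ∀ (q : K → ℝ) (Z : K), (∀ Y, q Z ≤ q Y) → (⨅ Y : K, q Y) = q Z := by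
    intro q Z h
    refine le_antisymm (ciInf_le ⟨q Z, ?_⟩ Z) (le_ciInf h)
    rintro x ⟨Y, rfl⟩; exact h Y
  obtain ⟨Z₀, -, hZ₀'⟩ := isCompact_univ.exists_isMinOn Set.univ_nonempty hp.continuousOn
  have hZ₀ : ∀ Y, p Z₀ ≤ p Y := fun Y => isMinOn_iff.mp hZ₀' Y (Set.mem_univ Y)
  set f0 := p Z₀ with hf0
  have hM : {Z : K | ∀ Y, p Z ≤ p Y} = {Z : K | p Z ≤ f0} := by
    ext Z
    constructor
    · intro h; exact h Z₀
    · intro h Y; exact le_trans h (hZ₀ Y)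
  have hMc : IsCompact {Z : K | ∀ Y, p Z ≤ p Y} := by
    rw [hM]; exact (isClosed_le hp continuous_const).isCompact
  obtain ⟨ZL, hZLM, hZL''⟩ := hMc.exists_isMinOn ⟨Z₀, fun Y => hZ₀ Y⟩ hg.continuousOn
  have hZL' : ∀ Z ∈ {Z : K | ∀ Y, p Z ≤ p Y}, g ZL ≤ g Z := fun Z hZ => isMinOn_iff.mp hZL'' Z hZ
  refine ⟨g ZL, ⟨⟨ZL, hZLM, rfl⟩, by rintro l ⟨Z, hZ, rfl⟩; exact hZL' Z hZ⟩, ?_⟩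
  obtain ⟨ZB, -, hZB''⟩ := isCompact_univ.exists_isMaxOn Set.univ_nonempty hg.abs.continuousOn
  have hZB' : ∀ Z, |g Z| ≤ |g ZB| := fun Z => isMaxOn_iff.mp hZB'' Z (Set.mem_univ Z)
  set B := |g ZB| with hB
  have hBnn : 0 ≤ B := abs_nonneg _
  have hgB : ∀ Z, |g Z| ≤ B := hZB'
  set L := g ZL with hLdef
  have hLB : |L| ≤ B := hgB ZL
  have hpZL : p ZL = f0 := le_antisymm (hZLM Z₀) (hZ₀ ZL)
  have claim : ∀ δ > (0:ℝ), ∃ η > (0:ℝ), ∀ Z, p Z < f0 + η → L - δ < g Z := by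
    intro δ hδ
    by_cases hC : {Z : K | g Z ≤ L - δ}.Nonempty
    · have hCc : IsCompact {Z : K | g Z ≤ L - δ} :=
        (isClosed_le hg continuous_const).isCompact
      obtain ⟨Zc, hZcC, hZc'⟩ := hCc.exists_isMinOn hC hp.continuousOn
      have hZc : ∀ Z ∈ {Z : K | g Z ≤ L - δ}, p Zc ≤ p Z := fun Z hZ => isMinOn_iff.mp hZc' Z hZ
      refine ⟨p Zc - f0, ?_, ?_⟩
      · by_contra h
        push_neg at h
        have hZcM : Zc ∈ {Z : K | ∀ Y, p Z ≤ p Y} := by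
          rw [hM]; simp only [Set.mem_setOf_eq]; linarith
        have h1 : L ≤ g Zc := hZL' Zc hZcM
        have h2 : g Zc ≤ L - δ := hZcC
        linarith
      · intro Z hZ
        by_contra hgZ
        push_neg at hgZ
        have := hZc Z hgZ
        linarith
    · refine ⟨1, one_pos, fun Z _ => ?_⟩
      by_contra h
      push_neg at h
      exact hC ⟨Z, h⟩
  have hinf0 : (⨅ Z : K, p Z) = f0 := hInfEq p Z₀ hZ₀
  rw [Metric.tendsto_nhdsWithin_nhds]
  intro ε hε
  obtain ⟨η, hη, hηP⟩ := claim (ε/2) (by linarith)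
  refine ⟨η / (2*B+1), by positivity, ?_⟩
  intro t ht hdist
  have ht0 : (0:ℝ) < t := ht
  rw [Real.dist_eq, sub_zero, abs_of_pos ht0] at hdist
  have h2 : t * (2*B+1) < η := (lt_div_iff₀ (by positivity)).mp hdist
  obtain ⟨Zt, -, hZt'⟩ := isCompact_univ.exists_isMinOn Set.univ_nonempty
    (hp.add (continuous_const.mul hg)).continuousOn
  have hZt : ∀ Y, p Zt + t * g Zt ≤ p Y + t * g Y := fun Y => isMinOn_iff.mp hZt' Y (Set.mem_univ Y)
  have hinft : (⨅ Z : K, (p Z + t * g Z)) = p Zt + t * g Zt := hInfEq _ Zt hZt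
  have hub : p Zt + t * g Zt ≤ f0 + t * L := by
    calc p Zt + t * g Zt ≤ p ZL + t * g ZL := hZt ZL
    _ = f0 + t * L := by rw [hpZL]
  have hlb1 : f0 ≤ p Zt := hZ₀ Zt
  have hgt := abs_le.mp (hgB Zt)
  have hLb := abs_le.mp hLB
  have h1 : p Zt < f0 + η := by nlinarith [hub, hgt.1, hgt.2, hLb.1, hLb.2]
  have h3 : L - ε/2 < g Zt := hηP Zt h1
  have heq : ((⨅ Z : K, (p Z + t * g Z)) - ⨅ Z : K, p Z) / t
      = (p Zt + t * g Zt - f0) / t := by rw [hinft, hinf0]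
  rw [Real.dist_eq, heq, abs_lt]
  constructor
  · have hq : L - ε/2 < (p Zt + t * g Zt - f0) / t := by
      rw [lt_div_iff₀ ht0]; nlinarith
    linarith
  · have hq : (p Zt + t * g Zt - f0) / t ≤ L := by
      rw [div_le_iff₀ ht0]; nlinarith
    linarith

/-- For `f ω = ⨅ Z, F ω Z` with `F` jointly continuous on a compact set of centroids and
affine in `ω`, the one-sided directional derivative of `f` at `ω₀` along a feasible
direction `v` exists and equals the minimum, over the minimizers `Z` of `F ω₀ ·`,
of the directional derivative `∑ i j, v i j * c Z i j` of the affine map `F (·, Z)`. -/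
theorem directional_derivative_of_min (k n : ℕ) (K : Type*)
    [TopologicalSpace K] [CompactSpace K] [Nonempty K]
    (Θ : Set (Matrix (Fin k) (Fin n) ℝ)) (hΘ : Convex ℝ Θ)
    (a : K → ℝ) (c : K → Matrix (Fin k) (Fin n) ℝ)
    (ha : Continuous a) (hc : Continuous c)
    (F : Matrix (Fin k) (Fin n) ℝ → K → ℝ)
    (hF : ∀ ω Z, F ω Z = a Z + ∑ i, ∑ j, c Z i j * ω i j)
    (ω₀ : Matrix (Fin k) (Fin n) ℝ) (hω₀ : ω₀ ∈ Θ)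
    (v : Matrix (Fin k) (Fin n) ℝ)
    (hfeas : ∃ ε > (0 : ℝ), ∀ t : ℝ, 0 < t → t < ε → ω₀ + t • v ∈ Θ) :
    ∃ L : ℝ,
      IsLeast {l : ℝ | ∃ Z : K, (∀ Y : K, F ω₀ Z ≤ F ω₀ Y) ∧
        l = ∑ i, ∑ j, v i j * c Z i j} L ∧
      Tendsto (fun t : ℝ =>
          ((⨅ Z : K, F (ω₀ + t • v) Z) - ⨅ Z : K, F ω₀ Z) / t)
        (𝓝[>] 0) (𝓝 L) := by
  set g : K → ℝ := fun Z => ∑ i, ∑ j, v i j * c Z i j with hg_def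
  have hcij : ∀ (i : Fin k) (j : Fin n), Continuous fun Z => c Z i j := fun i j =>
    (continuous_apply j).comp ((continuous_apply i).comp hc)
  have hg : Continuous g := by
    rw [hg_def]
    exact continuous_finset_sum _ fun i _ =>
      continuous_finset_sum _ fun j _ => continuous_const.mul (hcij i j)
  have hp : Continuous (F ω₀) := by
    have hFe : F ω₀ = fun Z => a Z + ∑ i, ∑ j, c Z i j * ω₀ i j := funext fun Z => hF ω₀ Z
    rw [hFe]
    exact ha.add (continuous_finset_sum _ fun i _ =>
      continuous_finset_sum _ fun j _ => (hcij i j).mul continuous_const)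
  have key : ∀ (t : ℝ) (Z : K), F (ω₀ + t • v) Z = F ω₀ Z + t * g Z := by
    intro t Z
    have h1 : ∀ (i : Fin k) (j : Fin n),
        c Z i j * (ω₀ + t • v) i j = c Z i j * ω₀ i j + t * (v i j * c Z i j) := by
      intro i j
      simp only [Matrix.add_apply, Matrix.smul_apply, smul_eq_mul]
      ring
    simp only [hF, hg_def, h1, Finset.sum_add_distrib, Finset.mul_sum]
    ring
  obtain ⟨L, hL1, hL2⟩ := aux_min_dd (F ω₀) g hp hg
  refine ⟨L, hL1, ?_⟩
  have hfun : (fun t : ℝ => ((⨅ Z : K, F (ω₀ + t • v) Z) - ⨅ Z : K, F ω₀ Z) / t)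
      = fun t : ℝ => ((⨅ Z : K, (F ω₀ Z + t * g Z)) - ⨅ Z : K, F ω₀ Z) / t := by
    funext t
    congr 1
    congr 1
    exact iInf_congr (key t)
  rw [hfun]
  exact hL2
end

section
/- In the k-means iteration, if the cluster assignment does not change from iteration t to t+1 (ω^{(t+1)} = ω^{(t)}) and Z^{(t)} already minimizes F(ω^{(t)}, ·), then (ω^{(t)}, Z^{(t)}) is a partial optimal point of the relaxed problem; in particular, the linearity of F in ω implies ω^{(t)} (a nearest-centroid 0–1 assignment) minimizes F(·, Z^{(t)}) over all column-stochastic matrices, not just over 0–1 matrices. -/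
/-- If the nearest-centroid 0–1 assignment `ω` is unchanged and `Z` already minimizes
`F(ω, ·)` over `S^k`, then `(ω, Z)` is a partial optimal point of the relaxed problem:
`ω` minimizes `F(·, Z)` over all column-stochastic matrices, and `Z` minimizes
`F(ω, ·)` over `S^k`. -/
theorem stable_assignment_partial_optimal {X : Type*} [MetricSpace X] (k n : ℕ)
    (D : Fin n → X) (S : Set X) (Z : Fin k → X) (hZS : ∀ i, Z i ∈ S)
    (ω : Matrix (Fin k) (Fin n) ℝ)
    (hω01 : ∀ i j, ω i j = 0 ∨ ω i j = 1)
    (hωcol : ∀ j, ∑ i, ω i j = 1)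
    (hnear : ∀ i j, ω i j = 1 → ∀ l, dist (D j) (Z i) ^ 2 ≤ dist (D j) (Z l) ^ 2)
    (hZmin : ∀ Z' : Fin k → X, (∀ i, Z' i ∈ S) →
      ∑ i, ∑ j, ω i j * dist (D j) (Z i) ^ 2 ≤
        ∑ i, ∑ j, ω i j * dist (D j) (Z' i) ^ 2) :
    (∀ ω' : Matrix (Fin k) (Fin n) ℝ,
      ((∀ i j, 0 ≤ ω' i j) ∧ ∀ j, ∑ i, ω' i j = 1) →
      ∑ i, ∑ j, ω i j * dist (D j) (Z i) ^ 2 ≤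
        ∑ i, ∑ j, ω' i j * dist (D j) (Z i) ^ 2) ∧
    (∀ Z' : Fin k → X, (∀ i, Z' i ∈ S) →
      ∑ i, ∑ j, ω i j * dist (D j) (Z i) ^ 2 ≤
        ∑ i, ∑ j, ω i j * dist (D j) (Z' i) ^ 2) := by
  refine ⟨?_, hZmin⟩
  intro ω' ⟨hpos, hcol⟩
  set c : Fin k → Fin n → ℝ := fun i j => dist (D j) (Z i) ^ 2 with hc
  -- for each j, pick i0 with ω i0 j = 1
  have hex : ∀ j, ∃ i0, ω i0 j = 1 := by
    intro j
    by_contra h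
    push_neg at h
    have : ∀ i, ω i j = 0 := fun i => (hω01 i j).resolve_right (h i)
    have h0 := hωcol j
    rw [Finset.sum_congr rfl (fun i _ => this i)] at h0
    simp at h0
  choose i0 hi0 using hex
  have key : ∀ j i, ω i j * c i j = ω i j * c (i0 j) j := by
    intro j i
    rcases hω01 i j with h | h
    · simp [h]
    · have h1 := hnear i j h (i0 j)
      have h2 := hnear (i0 j) j (hi0 j) i
      have : c i j = c (i0 j) j := le_antisymm h1 h2
      rw [this]
  rw [Finset.sum_comm, Finset.sum_comm (f := fun i j => ω' i j * c i j)]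
  apply Finset.sum_le_sum
  intro j _
  calc ∑ i, ω i j * c i j = ∑ i, ω i j * c (i0 j) j := by
        exact Finset.sum_congr rfl fun i _ => key j i
    _ = c (i0 j) j := by rw [← Finset.sum_mul, hωcol j, one_mul]
    _ = ∑ i, ω' i j * c (i0 j) j := by rw [← Finset.sum_mul, hcol j, one_mul]
    _ ≤ ∑ i, ω' i j * c i j := by
        apply Finset.sum_le_sum
        intro i _
        exact mul_le_mul_of_nonneg_left (hnear (i0 j) j (hi0 j) i) (hpos i j)
end
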